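/- Let V = [V_k, V_{−k}] and V̂ = [V̂_k, V̂_{−k}] be d×d real orthogonal matrices, where V_k, V̂_k ∈ ℝ^{d×k}, and suppose ‖V_k·V_kᵀ − V̂_k·V̂_kᵀ‖₂ ≤ α for some α ∈ [0,1]. Set C_k = V_kᵀ·V̂_k ∈ ℝ^{k×k} and C_{−k} = V_{−k}ᵀ·V̂_k ∈ ℝ^{(d−k)×k}. Then V̂_k = V_k·C_k + V_{−k}·C_{−k}, the matrix inequalities (1−α)·I ⪯ C_k·C_kᵀ ⪯ I hold (in the positive semidefinite order), and ‖C_{−k}‖₂ ≤ α. -/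

import Mathlib

open Matrix Finset Filter

noncomputable section

abbrev EVec (d : ℕ) := EuclideanSpace ℝ (Fin d)

/-- The operator (spectral) norm of a real matrix, i.e. the norm of the induced
linear map between Euclidean spaces. -/
noncomputable def specNorm {m n : Type*} [Fintype m] [Fintype n] [DecidableEq n]
    (A : Matrix m n ℝ) : ℝ :=
  ‖LinearMap.toContinuousLinearMap (Matrix.toEuclideanLin A)‖

/-- Matrix-vector multiplication on Euclidean space. -/
noncomputable def mulVecE {d : ℕ} (A : Matrix (Fin d) (Fin d) ℝ) (x : EVec d) : EVec d :=
  Matrix.toEuclideanLin A x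

/-- Outer product `v · wᵀ` of two vectors. -/
def outer {d : ℕ} (v w : EVec d) : Matrix (Fin d) (Fin d) ℝ :=
  Matrix.of fun i j => v i * w j

namespace SubRepAux

def toE {n : ℕ} (x : Fin n → ℝ) : EuclideanSpace ℝ (Fin n) := WithLp.toLp 2 x

lemma toEuclideanLin_toE {m n : ℕ} (A : Matrix (Fin m) (Fin n) ℝ) (x : Fin n → ℝ) :
    Matrix.toEuclideanLin A (toE x) = toE (A *ᵥ x) := by
  simp [Matrix.toEuclideanLin, toE]

lemma inner_toE {n : ℕ} (x y : Fin n → ℝ) :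
    inner (𝕜 := ℝ) (toE x) (toE y) = x ⬝ᵥ y := by
  simp [PiLp.inner_apply, toE, dotProduct, RCLike.inner_apply, mul_comm]

lemma norm_sq_toE {n : ℕ} (x : Fin n → ℝ) : ‖toE x‖ ^ 2 = x ⬝ᵥ x := by
  rw [← real_inner_self_eq_norm_sq]; exact inner_toE x x

lemma dot_self_nonneg {n : ℕ} (x : Fin n → ℝ) : 0 ≤ x ⬝ᵥ x :=
  Finset.sum_nonneg fun i _ => mul_self_nonneg _

lemma mulVec_norm_le {m n : ℕ} (A : Matrix (Fin m) (Fin n) ℝ) (x : Fin n → ℝ) :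
    ‖toE (A *ᵥ x)‖ ≤ specNorm A * ‖toE x‖ := by
  rw [← toEuclideanLin_toE]
  simpa [specNorm] using
    (LinearMap.toContinuousLinearMap (Matrix.toEuclideanLin A)).le_opNorm (toE x)

lemma mulVec_dot_le {m n : ℕ} (A : Matrix (Fin m) (Fin n) ℝ) (x : Fin n → ℝ) :
    (A *ᵥ x) ⬝ᵥ (A *ᵥ x) ≤ specNorm A ^ 2 * (x ⬝ᵥ x) := by
  rw [← norm_sq_toE, ← norm_sq_toE, ← mul_pow]
  exact pow_le_pow_left₀ (norm_nonneg _) (mulVec_norm_le A x) 2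

lemma quad_le {n : ℕ} (A : Matrix (Fin n) (Fin n) ℝ) (x : Fin n → ℝ) :
    x ⬝ᵥ (A *ᵥ x) ≤ specNorm A * (x ⬝ᵥ x) := by
  calc x ⬝ᵥ (A *ᵥ x) = inner (𝕜 := ℝ) (toE x) (toE (A *ᵥ x)) := (inner_toE _ _).symm
    _ ≤ ‖toE x‖ * ‖toE (A *ᵥ x)‖ := real_inner_le_norm _ _
    _ ≤ ‖toE x‖ * (specNorm A * ‖toE x‖) :=
        mul_le_mul_of_nonneg_left (mulVec_norm_le A x) (norm_nonneg _)
    _ = specNorm A * ‖toE x‖ ^ 2 := by ring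
    _ = specNorm A * (x ⬝ᵥ x) := by rw [norm_sq_toE]

lemma specNorm_nonneg {m n : ℕ} (A : Matrix (Fin m) (Fin n) ℝ) : 0 ≤ specNorm A :=
  norm_nonneg _

lemma specNorm_le {m n : ℕ} (A : Matrix (Fin m) (Fin n) ℝ) {c : ℝ} (hc : 0 ≤ c)
    (h : ∀ x : Fin n → ℝ, (A *ᵥ x) ⬝ᵥ (A *ᵥ x) ≤ c ^ 2 * (x ⬝ᵥ x)) :
    specNorm A ≤ c := by
  refine ContinuousLinearMap.opNorm_le_bound _ hc fun x => ?_
  have hx : ‖(LinearMap.toContinuousLinearMap (Matrix.toEuclideanLin A)) x‖ = ‖toE (A *ᵥ x)‖ := by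
    congr 1
  rw [hx]
  have h2 : ‖toE (A *ᵥ x)‖ ^ 2 ≤ (c * ‖toE x‖) ^ 2 := by
    rw [norm_sq_toE, mul_pow, norm_sq_toE]; exact h x
  exact le_of_sq_le_sq (show _ ≤ (c * ‖x‖) ^ 2 from h2) (by positivity)

lemma iso_dot {m n : ℕ} (A : Matrix (Fin m) (Fin n) ℝ) (h : Aᵀ * A = 1) (x : Fin n → ℝ) :
    (A *ᵥ x) ⬝ᵥ (A *ᵥ x) = x ⬝ᵥ x := by
  rw [dotProduct_mulVec, ← vecMul_transpose, vecMul_vecMul, h, vecMul_one]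

lemma dot_transpose_mulVec_self {m n : ℕ} (A : Matrix (Fin m) (Fin n) ℝ) (y : Fin m → ℝ) :
    (Aᵀ *ᵥ y) ⬝ᵥ (Aᵀ *ᵥ y) = y ⬝ᵥ ((A * Aᵀ) *ᵥ y) := by
  conv_rhs => rw [← mulVec_mulVec, dotProduct_mulVec, ← mulVec_transpose]

lemma herm_of_symm {n : ℕ} {M : Matrix (Fin n) (Fin n) ℝ} (h : Mᵀ = M) : M.IsHermitian := by
  rwa [Matrix.IsHermitian, conjTranspose_eq_transpose_of_trivial]

lemma posSemidef_mul_transpose_self {a b : ℕ} (B : Matrix (Fin a) (Fin b) ℝ) :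
    (B * Bᵀ).PosSemidef := by
  rw [show Bᵀ = Bᴴ from (conjTranspose_eq_transpose_of_trivial B).symm]
  exact posSemidef_self_mul_conjTranspose B

end SubRepAux

open SubRepAux

/-- Lemma 5.1: if `V = [V_k, V_{-k}]` and `V̂ = [V̂_k, V̂_{-k}]` are orthogonal with
`‖V_k V_kᵀ - V̂_k V̂_kᵀ‖₂ ≤ α`, then with `C_k = V_kᵀ V̂_k` and `C_{-k} = V_{-k}ᵀ V̂_k`
we have `V̂_k = V_k C_k + V_{-k} C_{-k}`, `(1-α) I ⪯ C_k C_kᵀ ⪯ I` and `‖C_{-k}‖₂ ≤ α`. -/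
theorem subspace_representation {d k : ℕ} (hk : k ≤ d)
    (Vk Vhatk : Matrix (Fin d) (Fin k) ℝ)
    (Vmk Vhatmk : Matrix (Fin d) (Fin (d - k)) ℝ)
    (hV : Matrix.fromCols Vk Vmk * (Matrix.fromCols Vk Vmk)ᵀ = 1)
    (hVhat : Matrix.fromCols Vhatk Vhatmk * (Matrix.fromCols Vhatk Vhatmk)ᵀ = 1)
    (α : ℝ) (hα0 : 0 ≤ α) (hα1 : α ≤ 1)
    (hclose : specNorm (Vk * Vkᵀ - Vhatk * Vhatkᵀ) ≤ α) :
    Vhatk = Vk * (Vkᵀ * Vhatk) + Vmk * (Vmkᵀ * Vhatk) ∧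
    (Vkᵀ * Vhatk * (Vkᵀ * Vhatk)ᵀ - (1 - α) • (1 : Matrix (Fin k) (Fin k) ℝ)).PosSemidef ∧
    ((1 : Matrix (Fin k) (Fin k) ℝ) - Vkᵀ * Vhatk * (Vkᵀ * Vhatk)ᵀ).PosSemidef ∧
    specNorm (Vmkᵀ * Vhatk) ≤ α := by
  classical
  have e : Fin d ≃ Fin k ⊕ Fin (d - k) :=
    (finCongr (Nat.add_sub_cancel' hk).symm).trans finSumFinEquiv.symm
  set D : Matrix (Fin d) (Fin d) ℝ := Vk * Vkᵀ - Vhatk * Vhatkᵀ with hD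
  -- column-orthogonality relations
  have hVtV := (Matrix.mul_eq_one_comm_of_equiv e).mp hV
  rw [transpose_fromCols, fromRows_mul_fromCols, ← fromBlocks_one] at hVtV
  obtain ⟨hkk, hkm, hmk, hmm⟩ := fromBlocks_inj.mp hVtV
  have hVhattV := (Matrix.mul_eq_one_comm_of_equiv e).mp hVhat
  rw [transpose_fromCols, fromRows_mul_fromCols, ← fromBlocks_one] at hVhattV
  obtain ⟨hhkk, hhkm, hhmk, hhmm⟩ := fromBlocks_inj.mp hVhattV
  rw [transpose_fromCols, fromCols_mul_fromRows] at hV hVhat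
  -- hV : Vk * Vkᵀ + Vmk * Vmkᵀ = 1, etc.
  have hhat : Vhatk * Vhatkᵀ = Vk * Vkᵀ - D := (sub_sub_cancel _ _).symm
  refine ⟨?_, ?_, ?_, ?_⟩
  · rw [← Matrix.mul_assoc, ← Matrix.mul_assoc, ← Matrix.add_mul, hV, Matrix.one_mul]
  · -- C_k C_kᵀ - (1-α) I is PSD
    have hCkId : Vkᵀ * Vhatk * (Vkᵀ * Vhatk)ᵀ = 1 - Vkᵀ * (D * Vk) := by
      rw [transpose_mul, transpose_transpose, Matrix.mul_assoc, ← Matrix.mul_assoc Vhatk, hhat]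
      simp only [Matrix.mul_sub, Matrix.sub_mul, Matrix.mul_assoc]
      rw [hkk, Matrix.mul_one, hkk]
    rw [posSemidef_iff_dotProduct_mulVec]
    constructor
    · apply herm_of_symm
      simp only [transpose_sub, transpose_smul, transpose_one, transpose_mul,
        transpose_transpose, Matrix.mul_assoc]
    · intro x
      rw [star_trivial, hCkId]
      have hmv : (1 - Vkᵀ * (D * Vk) - (1 - α) • 1) *ᵥ x
          = x - Vkᵀ *ᵥ (D *ᵥ (Vk *ᵥ x)) - (1 - α) • x := by
        simp [Matrix.sub_mulVec, Matrix.smul_mulVec, Matrix.one_mulVec, mulVec_mulVec,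
          Matrix.mul_assoc]
      rw [hmv]
      have hdot : x ⬝ᵥ (Vkᵀ *ᵥ (D *ᵥ (Vk *ᵥ x))) = (Vk *ᵥ x) ⬝ᵥ (D *ᵥ (Vk *ᵥ x)) := by
        rw [dotProduct_mulVec, vecMul_transpose]
      have hq := quad_le D (Vk *ᵥ x)
      have hiso := iso_dot Vk hkk x
      have hs := dot_self_nonneg x
      have hsD := specNorm_nonneg D
      rw [dotProduct_sub, dotProduct_sub, dotProduct_smul, hdot]
      rw [hiso] at hq
      simp only [smul_eq_mul]
      nlinarith [hclose]
  · -- I - C_k C_kᵀ is PSD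
    have hId3 : (1 : Matrix (Fin k) (Fin k) ℝ) - Vkᵀ * Vhatk * (Vkᵀ * Vhatk)ᵀ
        = (Vkᵀ * Vhatmk) * (Vkᵀ * Vhatmk)ᵀ := by
      have h1 : Vhatmk * Vhatmkᵀ = 1 - Vhatk * Vhatkᵀ := eq_sub_of_add_eq' hVhat
      symm
      rw [transpose_mul, transpose_transpose, Matrix.mul_assoc, ← Matrix.mul_assoc Vhatmk, h1]
      simp only [Matrix.mul_sub, Matrix.sub_mul, Matrix.mul_assoc, Matrix.one_mul]
      rw [hkk, transpose_mul, transpose_transpose]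
    rw [hId3]
    exact posSemidef_mul_transpose_self _
  · -- spectral norm bound
    have hCmkId : Vmkᵀ * Vhatk = -(Vmkᵀ * (D * Vhatk)) := by
      calc Vmkᵀ * Vhatk = Vmkᵀ * (Vhatk * (Vhatkᵀ * Vhatk)) := by
            rw [hhkk, Matrix.mul_one]
        _ = Vmkᵀ * ((Vk * Vkᵀ - D) * Vhatk) := by
            rw [← Matrix.mul_assoc Vhatk, ← hhat]
        _ = Vmkᵀ * (Vk * (Vkᵀ * Vhatk)) - Vmkᵀ * (D * Vhatk) := by
            simp only [Matrix.sub_mul, Matrix.mul_sub, Matrix.mul_assoc]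
        _ = -(Vmkᵀ * (D * Vhatk)) := by
            rw [← Matrix.mul_assoc Vmkᵀ, hmk, Matrix.zero_mul, zero_sub]
    apply specNorm_le _ hα0
    intro x
    have hmv : (Vmkᵀ * Vhatk) *ᵥ x = -(Vmkᵀ *ᵥ (D *ᵥ (Vhatk *ᵥ x))) := by
      rw [hCmkId, Matrix.neg_mulVec]
      simp [mulVec_mulVec, Matrix.mul_assoc]
    rw [hmv, dotProduct_neg, neg_dotProduct, neg_neg]
    set y := D *ᵥ (Vhatk *ᵥ x) with hy
    have h1 : (Vmkᵀ *ᵥ y) ⬝ᵥ (Vmkᵀ *ᵥ y) = y ⬝ᵥ ((Vmk * Vmkᵀ) *ᵥ y) :=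
      dot_transpose_mulVec_self Vmk y
    have h2 : Vmk * Vmkᵀ = 1 - Vk * Vkᵀ := eq_sub_of_add_eq' hV
    have h3 : y ⬝ᵥ ((1 - Vk * Vkᵀ) *ᵥ y) = y ⬝ᵥ y - (Vkᵀ *ᵥ y) ⬝ᵥ (Vkᵀ *ᵥ y) := by
      rw [Matrix.sub_mulVec, dotProduct_sub, Matrix.one_mulVec, dot_transpose_mulVec_self]
    rw [h1, h2, h3]
    have h4 := dot_self_nonneg (Vkᵀ *ᵥ y)
    have h5 : y ⬝ᵥ y ≤ specNorm D ^ 2 * ((Vhatk *ᵥ x) ⬝ᵥ (Vhatk *ᵥ x)) := mulVec_dot_le D _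
    have h6 : (Vhatk *ᵥ x) ⬝ᵥ (Vhatk *ᵥ x) = x ⬝ᵥ x := iso_dot Vhatk hhkk x
    have h7 : specNorm D ^ 2 ≤ α ^ 2 := by
      have := specNorm_nonneg D; nlinarith [hclose]
    rw [h6] at h5
    have h8 : specNorm D ^ 2 * (x ⬝ᵥ x) ≤ α ^ 2 * (x ⬝ᵥ x) :=
      mul_le_mul_of_nonneg_right h7 (dot_self_nonneg x)
    linarith
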